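/- arXiv:1702.04538 — 3 statements merged into one kernel-verified Lean document; each statement's English description precedes it below -/
import Mathlib

section
/- In a jointly strongly connected time-varying digraph on nodes {1,...,N}, suppose each node i holds a value V_i(t) ∈ ℝ that is nondecreasing in t, and whenever edge (i,j) is active at time t, V_j(t+1) ≥ V_i(t). If all V_i are eventually stationary, then all stationary values are equal. -/
/-- Consensus over a jointly strongly connected time-varying digraph: if each
node's value `V i t` is nondecreasing in `t`, an active edge `(i, j)` at time
`t` forces `V j (t+1) ≥ V i t`, the union digraph from every time on is
strongly connected, and all values are eventually stationary, then all the
stationary values coincide. -/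
theorem jointly_connected_consensus (N : ℕ)
    (E : ℕ → Fin N → Fin N → Prop)
    (hconn : ∀ t : ℕ, ∀ i j : Fin N,
      Relation.ReflTransGen (fun a b => ∃ τ ≥ t, E τ a b) i j)
    (V : Fin N → ℕ → ℝ)
    (hmono : ∀ i, Monotone (V i))
    (hedge : ∀ t i j, E t i j → V i t ≤ V j (t + 1))
    (T : ℕ) (hstat : ∀ i, ∀ t ≥ T, V i t = V i T) :
    ∀ i j : Fin N, V i T = V j T := by
  have key : ∀ i j : Fin N, V i T ≤ V j T := by
    intro i j
    induction hconn T i j with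
    | refl => exact le_rfl
    | tail _ e ih =>
      obtain ⟨τ, hτ, he⟩ := e
      calc V i T ≤ V _ T := ih
        _ = V _ τ := (hstat _ τ hτ).symm
        _ ≤ V _ (τ + 1) := hedge τ _ _ he
        _ = V _ T := hstat _ (τ + 1) (le_trans hτ (Nat.le_succ τ))
  intro i j
  exact le_antisymm (key i j) (key j i)
end

section
/- If C̄ ⊆ S is a set such that for every node i the set C̄ is an ε-core-set of a subset P_i ⊆ S with s_i ∈ P_i and ∪_i P_i = S, and r(C̄) ≤ r(S), then ||c(C̄) − s_i|| ≤ (1+ε)·r(S) for all i, i.e., C̄ is an ε-core-set of S = {s_1,...,s_N}. -/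
open scoped Classical

/-- The radius of the minimum enclosing ball of a finite set of points. -/
noncomputable def mebRadius {d : ℕ} (C : Finset (EuclideanSpace ℝ (Fin d))) : ℝ :=
  sInf {ρ : ℝ | 0 ≤ ρ ∧ ∃ z : EuclideanSpace ℝ (Fin d), ∀ p ∈ C, dist z p ≤ ρ}

/-- The center of the minimum enclosing ball of a finite set of points. -/
noncomputable def mebCenter {d : ℕ} (C : Finset (EuclideanSpace ℝ (Fin d))) :
    EuclideanSpace ℝ (Fin d) :=
  if h : ∃ z : EuclideanSpace ℝ (Fin d), ∀ p ∈ C, dist z p ≤ mebRadius C then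
    h.choose else 0

lemma mebRadius_mono {d : ℕ} {A B : Finset (EuclideanSpace ℝ (Fin d))} (hAB : A ⊆ B) :
    mebRadius A ≤ mebRadius B := by
  apply csInf_le_csInf
  · exact ⟨0, fun ρ hρ => hρ.1⟩
  · refine ⟨∑ p ∈ B, dist (0 : EuclideanSpace ℝ (Fin d)) p, ?_, 0, fun p hp => ?_⟩
    · exact Finset.sum_nonneg fun p _ => dist_nonneg
    · exact Finset.single_le_sum (f := fun q => dist (0 : EuclideanSpace ℝ (Fin d)) q) (fun q _ => dist_nonneg) hp
  · rintro ρ ⟨hρ, z, hz⟩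
    exact ⟨hρ, z, fun p hp => hz p (hAB hp)⟩

/-- If `C̄ ⊆ S` is an ε-core-set of every local subset `Pᵢ ⊆ S` with `sᵢ ∈ Pᵢ`
and `⋃ᵢ Pᵢ = S`, and `r(C̄) ≤ r(S)`, then `C̄` is an ε-core-set of
`S = {s₁, …, s_N}`: every `sᵢ` is within `(1+ε)·r(S)` of `c(C̄)`. -/
theorem local_coresets_give_global_coreset {d N : ℕ} (ε : ℝ) (hε : 0 ≤ ε)
    (s : Fin N → EuclideanSpace ℝ (Fin d))
    (S : Finset (EuclideanSpace ℝ (Fin d)))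
    (hS : S = Finset.image s Finset.univ)
    (Cbar : Finset (EuclideanSpace ℝ (Fin d))) (hCS : Cbar ⊆ S)
    (P : Fin N → Finset (EuclideanSpace ℝ (Fin d)))
    (hPS : ∀ i, P i ⊆ S) (hsP : ∀ i, s i ∈ P i)
    (hcover : S = Finset.univ.biUnion P)
    (hcore : ∀ i, ∀ p ∈ P i, dist (mebCenter Cbar) p ≤ (1 + ε) * mebRadius (P i))
    (hrad : mebRadius Cbar ≤ mebRadius S) :
    ∀ i, dist (mebCenter Cbar) (s i) ≤ (1 + ε) * mebRadius S := by
  intro i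
  calc dist (mebCenter Cbar) (s i) ≤ (1 + ε) * mebRadius (P i) := hcore i (s i) (hsP i)
    _ ≤ (1 + ε) * mebRadius S :=
      mul_le_mul_of_nonneg_left (mebRadius_mono (hPS i)) (by linarith)
end

section
/- Complementary slackness for the MEB: if x* is an optimal solution of the dual MEB problem and z* = Σ_i x_i* s_i is the MEB center with radius r_*, then x_i* > 0 implies ||z* − s_i|| = r_*, i.e., positive dual weights occur only on points lying on the boundary of the minimum enclosing ball. -/
open scoped BigOperators

set_option maxHeartbeats 1000000 in
/-- Complementary slackness for the MEB: if `x*` solves the dual MEB problem,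
`z* = Σᵢ xᵢ* sᵢ` is the MEB center, and `r*² = f(x*)` is the optimal value
(the squared MEB radius), then `xᵢ* > 0` implies `‖z* − sᵢ‖ = r*`. -/
theorem meb_complementary_slackness (d N : ℕ) (hN : 1 ≤ N)
    (s : Fin N → EuclideanSpace ℝ (Fin d))
    (xstar : Fin N → ℝ) (hx0 : ∀ i, 0 ≤ xstar i) (hx1 : (∑ i, xstar i) = 1)
    (hxopt : ∀ x : Fin N → ℝ, (∀ i, 0 ≤ x i) → (∑ i, x i) = 1 →
      (∑ i, x i * ‖s i‖ ^ 2) - ‖∑ i, x i • s i‖ ^ 2 ≤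
        (∑ i, xstar i * ‖s i‖ ^ 2) - ‖∑ i, xstar i • s i‖ ^ 2)
    (zstar : EuclideanSpace ℝ (Fin d)) (hz : zstar = ∑ i, xstar i • s i)
    (rstar : ℝ) (hr0 : 0 ≤ rstar)
    (hr : rstar ^ 2 = (∑ i, xstar i * ‖s i‖ ^ 2) - ‖∑ i, xstar i • s i‖ ^ 2) :
    ∀ i, 0 < xstar i → dist zstar (s i) = rstar := by
  set z : EuclideanSpace ℝ (Fin d) := ∑ i, xstar i • s i with hzdef
  set A : ℝ := ∑ i, xstar i * ‖s i‖ ^ 2 with hAdef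
  have hrA : rstar ^ 2 = A - ‖z‖ ^ 2 := hr
  have hzs : ∀ k, ‖z - s k‖ ^ 2 = ‖z‖^2 - 2 * (inner ℝ z (s k) : ℝ) + ‖s k‖^2 := by
    intro k
    rw [norm_sub_sq_real]
  have hzz : ∑ i, xstar i * (inner ℝ z (s i) : ℝ) = ‖z‖ ^ 2 := by
    rw [← real_inner_self_eq_norm_sq]
    nth_rewrite 2 [hzdef]
    rw [inner_sum]
    exact Finset.sum_congr rfl fun i _ => by rw [real_inner_smul_right]
  -- feasibility
  have feas : ∀ k, ‖z - s k‖ ^ 2 ≤ rstar ^ 2 := by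
    intro k
    have key : ∀ t : ℝ, 0 ≤ t → t ≤ 1 →
        t * (‖z - s k‖^2 - rstar^2) ≤ t^2 * ‖z - s k‖^2 := by
      intro t ht0 ht1
      have hnn : ∀ i, 0 ≤ (1-t) * xstar i + t * (if i = k then 1 else 0) := by
        intro i
        by_cases h : i = k
        · subst h; simp only [if_pos]
          nlinarith [hx0 i]
        · simp only [if_neg h, mul_zero, add_zero]
          nlinarith [hx0 i]
      have hsum : (∑ i, ((1-t) * xstar i + t * (if i = k then 1 else 0))) = 1 := by
        rw [Finset.sum_add_distrib, ← Finset.mul_sum, ← Finset.mul_sum, hx1]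
        simp
      have hx := hxopt (fun i => (1-t) * xstar i + t * (if i = k then 1 else 0)) hnn hsum
      have hsmul : (∑ i, ((1-t) * xstar i + t * (if i = k then 1 else 0)) • s i)
          = (1-t) • z + t • s k := by
        rw [hzdef, Finset.smul_sum]
        simp only [add_smul, Finset.sum_add_distrib, mul_smul, smul_assoc]
        congr 1
        rw [← Finset.smul_sum]
        congr 1
        simp [ite_smul]
      have hwsum : (∑ i, ((1-t) * xstar i + t * (if i = k then 1 else 0)) * ‖s i‖ ^ 2)
          = (1-t) * A + t * ‖s k‖ ^ 2 := by
        simp only [add_mul, Finset.sum_add_distrib, mul_assoc, ← Finset.mul_sum, hAdef]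
        congr 1
        congr 1
        simp [ite_mul]
      rw [hsmul, hwsum] at hx
      have hexp : ‖(1-t) • z + t • s k‖ ^ 2
          = (1-t)^2 * ‖z‖^2 + 2*(1-t)*t*(inner ℝ z (s k) : ℝ) + t^2 * ‖s k‖^2 := by
        simp only [norm_add_sq_real, norm_smul, real_inner_smul_left,
          real_inner_smul_right, Real.norm_eq_abs, mul_pow, sq_abs]
        ring
      rw [hexp] at hx
      have hB := hzs k
      nlinarith [hx, hrA, hB]
    by_contra hc
    push_neg at hc
    set B := ‖z - s k‖ ^ 2 with hBdef
    have hB0 : 0 < B := lt_of_le_of_lt (by positivity) hc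
    set t := (B - rstar^2)/(2*B) with htdef
    have hrsq : (0:ℝ) ≤ rstar^2 := sq_nonneg rstar
    have ht0 : 0 < t := by
      apply div_pos <;> linarith
    have ht1 : t ≤ 1 := by
      rw [div_le_one (by linarith)]
      linarith
    have := key t (le_of_lt ht0) ht1
    have htB : t * B = (B - rstar^2)/2 := by
      rw [htdef, div_mul_eq_mul_div, div_eq_div_iff (mul_ne_zero two_ne_zero hB0.ne') two_ne_zero]
      ring
    nlinarith [mul_pos ht0 (by linarith : (0:ℝ) < B - rstar^2)]
  -- weighted average equals rstar^2
  have havg : ∑ i, xstar i * ‖z - s i‖ ^ 2 = rstar ^ 2 := by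
    have : ∑ i, xstar i * ‖z - s i‖ ^ 2
        = (∑ i, xstar i) * ‖z‖^2 - 2 * (∑ i, xstar i * (inner ℝ z (s i) : ℝ)) + A := by
      rw [Finset.sum_mul, Finset.mul_sum, ← Finset.sum_sub_distrib, ← Finset.sum_add_distrib]
      exact Finset.sum_congr rfl fun i _ => by rw [hzs i]; ring
    rw [this, hx1, hzz, hrA]
    ring
  intro j hj
  have hzero : ∀ i ∈ Finset.univ, 0 ≤ xstar i * (rstar ^ 2 - ‖z - s i‖ ^ 2) :=
    fun i _ => mul_nonneg (hx0 i) (by linarith [feas i])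
  have hsum0 : ∑ i, xstar i * (rstar ^ 2 - ‖z - s i‖ ^ 2) = 0 := by
    simp only [mul_sub]
    rw [Finset.sum_sub_distrib, ← Finset.sum_mul, hx1, havg]
    ring
  have hj0 : xstar j * (rstar ^ 2 - ‖z - s j‖ ^ 2) = 0 :=
    (Finset.sum_eq_zero_iff_of_nonneg hzero).mp hsum0 j (Finset.mem_univ j)
  have heq : ‖z - s j‖ ^ 2 = rstar ^ 2 := by
    rcases mul_eq_zero.mp hj0 with h | h
    · exact absurd h (ne_of_gt hj)
    · linarith
  have : ‖z - s j‖ = rstar := by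
    have hn : (0:ℝ) ≤ ‖z - s j‖ := norm_nonneg _
    nlinarith [heq, hn, hr0, sq_nonneg (‖z - s j‖ - rstar), sq_nonneg (‖z - s j‖ + rstar)]
  rw [hz, dist_eq_norm]
  exact this
end
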